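/- Let X be a real random variable and U a random variable uniformly distributed on [0,1), independent of X. Then the fractional part {X + U} is uniformly distributed on [0,1) and is independent of X. -/

import Mathlib

open MeasureTheory ProbabilityTheory Set

instance fact_zero_lt_one_real : Fact ((0:ℝ) < 1) := ⟨one_pos⟩

noncomputable def circRep : UnitAddCircle → ℝ :=
  fun y => ((AddCircle.equivIco 1 0 y : Ico (0:ℝ) (0 + 1)) : ℝ)

lemma circRep_measurable : Measurable circRep :=
  measurable_subtype_coe.comp (AddCircle.measurableEquivIco 1 0).measurable_toFun

lemma circRep_mk (r : ℝ) : circRep ((r : ℝ) : UnitAddCircle) = Int.fract r := by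
  have := AddCircle.coe_equivIco_mk_apply (p := (1:ℝ)) r
  simpa [circRep] using this

lemma map_mk_Ico :
    Measure.map (fun r : ℝ => (r : UnitAddCircle)) (volume.restrict (Ico (0:ℝ) 1)) =
      (volume : Measure UnitAddCircle) := by
  have h1 : volume.restrict (Ico (0:ℝ) 1) = volume.restrict (Ioc (0:ℝ) 1) :=
    Measure.restrict_congr_set Ico_ae_eq_Ioc
  rw [h1]
  have := (AddCircle.measurePreserving_mk 1 0).map_eq
  simpa using this

lemma map_circRep :
    Measure.map circRep (volume : Measure UnitAddCircle) = volume.restrict (Ico (0:ℝ) 1) := by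
  rw [← map_mk_Ico, Measure.map_map circRep_measurable AddCircle.measurable_mk']
  have h : Measure.map (circRep ∘ fun r : ℝ => (r : UnitAddCircle))
      (volume.restrict (Ico (0:ℝ) 1)) =
      Measure.map id (volume.restrict (Ico (0:ℝ) 1)) := by
    apply Measure.map_congr
    filter_upwards [ae_restrict_mem measurableSet_Ico] with u hu
    simp [Function.comp, circRep_mk, Int.fract_eq_self.2 ⟨hu.1, hu.2⟩]
  rw [h, Measure.map_id]

/-- The key fiber lemma: translating by `x` and taking fractional part preserves
uniform measure on `[0,1)`. -/
lemma map_fract_add (x : ℝ) :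
    Measure.map (fun u : ℝ => Int.fract (x + u)) (volume.restrict (Ico (0:ℝ) 1)) =
      volume.restrict (Ico (0:ℝ) 1) := by
  have hfun : (fun u : ℝ => Int.fract (x + u)) =
      circRep ∘ (fun c : UnitAddCircle => ((x : ℝ) : UnitAddCircle) + c) ∘
        (fun r : ℝ => (r : UnitAddCircle)) := by
    funext u
    simp [Function.comp, ← circRep_mk (x + u)]
  rw [hfun]
  rw [← Function.comp_assoc]
  rw [← Measure.map_map ((circRep_measurable.comp (measurable_const_add _)))
    AddCircle.measurable_mk', map_mk_Ico,
    ← Measure.map_map circRep_measurable (measurable_const_add _),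
    (measurePreserving_add_left (volume : Measure UnitAddCircle) _).map_eq, map_circRep]

/-- If `X` is a real random variable and `U` is uniform on `[0,1)`
and independent of `X`, then the fractional part `{X + U}` is uniformly distributed
on `[0,1)` and independent of `X`. -/
theorem stmt12
    {Ω : Type*} [MeasurableSpace Ω] (P : Measure Ω) [IsProbabilityMeasure P]
    (X U : Ω → ℝ) (hX : Measurable X) (hU : Measurable U)
    (hindep : IndepFun X U P)
    (hunif : Measure.map U P = volume.restrict (Set.Ico (0:ℝ) 1)) :
    Measure.map (fun ω => Int.fract (X ω + U ω)) P = volume.restrict (Set.Ico (0:ℝ) 1) ∧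
      IndepFun (fun ω => Int.fract (X ω + U ω)) X P := by
  set ν := volume.restrict (Set.Ico (0:ℝ) 1) with hν
  have hνprob : IsProbabilityMeasure ν := by
    constructor
    simp [hν, Real.volume_Ico]
  have hXprob : IsProbabilityMeasure (Measure.map X P) :=
    Measure.isProbabilityMeasure_map hX.aemeasurable
  have hjoint : Measure.map (fun ω => (X ω, U ω)) P = (Measure.map X P).prod ν := by
    rw [← hunif]
    exact (indepFun_iff_map_prod_eq_prod_map_map hX.aemeasurable hU.aemeasurable).mp hindep
  -- skew product
  have hFmeas : Measurable (fun p : ℝ × ℝ => (p.1, Int.fract (p.1 + p.2))) :=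
    measurable_fst.prodMk ((measurable_fst.add measurable_snd).fract)
  have hskew : MeasurePreserving (fun p : ℝ × ℝ => (p.1, Int.fract (p.1 + p.2)))
      ((Measure.map X P).prod ν) ((Measure.map X P).prod ν) :=
    MeasurePreserving.skew_product (g := fun a c => Int.fract (a + c)) (MeasurePreserving.id _)
      ((measurable_fst.add measurable_snd).fract)
      (ae_of_all _ fun a => map_fract_add a)
  have hjoint2 : Measure.map (fun ω => (X ω, Int.fract (X ω + U ω))) P =
      (Measure.map X P).prod ν := by
    have hcomp : (fun ω => (X ω, Int.fract (X ω + U ω))) =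
        (fun p : ℝ × ℝ => (p.1, Int.fract (p.1 + p.2))) ∘ (fun ω => (X ω, U ω)) := rfl
    rw [hcomp, ← Measure.map_map hFmeas (hX.prodMk hU), hjoint, hskew.map_eq]
  have hmarg : Measure.map (fun ω => Int.fract (X ω + U ω)) P = ν := by
    have : Measure.map (fun ω => Int.fract (X ω + U ω)) P =
        Measure.map Prod.snd (Measure.map (fun ω => (X ω, Int.fract (X ω + U ω))) P) := by
      rw [Measure.map_map measurable_snd (hX.prodMk (g := fun ω => Int.fract (X ω + U ω)) ((hX.add hU).fract))]
      rfl
    rw [this, hjoint2, Measure.map_snd_prod, measure_univ, one_smul]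
  refine ⟨hmarg, ?_⟩
  have : IndepFun X (fun ω => Int.fract (X ω + U ω)) P := by
    rw [indepFun_iff_map_prod_eq_prod_map_map (g := fun ω => Int.fract (X ω + U ω)) hX.aemeasurable ((hX.add hU).fract).aemeasurable,
      hjoint2, hmarg]
  exact this.symm
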